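/- Let H(s) = C(sI − A)^{-1}B + D with A Hurwitz, and let P and S_ω[A] be the frequency-limited controllability gramian and the associated matrix-log term over [0, Ω]. Then (1/2π) trace(∫_{−Ω}^{Ω} H(jν) H^*(jν) dν) = trace(C P C^T + 2 (C S_ω[A] B + D·(Ω/2π)) D^T). -/

import Mathlib

open Matrix

/-- The principal matrix logarithm, expressed via its standard integral representation. -/
noncomputable def matLog {n : ℕ} (N : Matrix (Fin n) (Fin n) ℂ) : Matrix (Fin n) (Fin n) ℂ :=
  Matrix.of fun i k =>
    ∫ s in (0:ℝ)..1, ((N - 1) * ((s : ℂ) • (N - 1) + 1)⁻¹) i k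

/-- The resolventIm `(jν I - A)⁻¹` of a real matrix, as a complex matrix. -/
noncomputable def resolventIm {n : ℕ} (A : Matrix (Fin n) (Fin n) ℝ) (ν : ℝ) :
    Matrix (Fin n) (Fin n) ℂ :=
  (((ν : ℂ) * Complex.I) • (1 : Matrix (Fin n) (Fin n) ℂ) - A.map Complex.ofReal)⁻¹

/-- The frequency-limited controllability gramian (entrywise integral). -/
noncomputable def flGram {n m : ℕ} (A : Matrix (Fin n) (Fin n) ℝ)
    (B : Matrix (Fin n) (Fin m) ℝ) (Ω : ℝ) : Matrix (Fin n) (Fin n) ℂ :=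
  Matrix.of fun i k =>
    ((1 / (2 * Real.pi) : ℝ) : ℂ) *
      ∫ ν in (-Ω)..Ω,
        (resolventIm A ν * B.map Complex.ofReal * (B.map Complex.ofReal)ᴴ *
          (resolventIm A ν)ᴴ) i k

/-- `S_ω[A] = Real[(j/2π) ln((A + jΩI)(A − jΩI)⁻¹)]`, a real matrix. -/
noncomputable def SomegaRe {n : ℕ} (A : Matrix (Fin n) (Fin n) ℝ) (Ω : ℝ) :
    Matrix (Fin n) (Fin n) ℝ :=
  (((Complex.I / ((2 * Real.pi : ℝ) : ℂ)) •
    matLog ((A.map Complex.ofReal + ((Ω : ℂ) * Complex.I) • (1 : Matrix (Fin n) (Fin n) ℂ)) *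
      (A.map Complex.ofReal -
        ((Ω : ℂ) * Complex.I) • (1 : Matrix (Fin n) (Fin n) ℂ))⁻¹))).map Complex.re

/-- The transfer function `H(jν) = C (jνI − A)⁻¹ B + D` on the imaginary axis. -/
noncomputable def tfEval {n m p : ℕ} (A : Matrix (Fin n) (Fin n) ℝ)
    (B : Matrix (Fin n) (Fin m) ℝ) (C : Matrix (Fin p) (Fin n) ℝ)
    (D : Matrix (Fin p) (Fin m) ℝ) (ν : ℝ) : Matrix (Fin p) (Fin m) ℂ :=
  C.map Complex.ofReal * resolventIm A ν * B.map Complex.ofReal + D.map Complex.ofReal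

namespace Stmt10Aux

open MeasureTheory Complex intervalIntegral

variable {n : ℕ}

lemma isUnit_res (A : Matrix (Fin n) (Fin n) ℝ)
    (hA : ∀ μ ∈ spectrum ℂ (A.map Complex.ofReal), μ.re < 0) (z : ℂ) (hz : z.re = 0) :
    IsUnit (z • (1 : Matrix (Fin n) (Fin n) ℂ) - A.map Complex.ofReal) := by
  have hns : z ∉ spectrum ℂ (A.map Complex.ofReal) := fun h => by
    have := hA z h; rw [hz] at this; exact lt_irrefl 0 this
  have := spectrum.notMem_iff.mp hns
  rwa [Algebra.algebraMap_eq_smul_one] at this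

lemma isUnit_res_det (A : Matrix (Fin n) (Fin n) ℝ)
    (hA : ∀ μ ∈ spectrum ℂ (A.map Complex.ofReal), μ.re < 0) (ν : ℝ) :
    IsUnit ((((ν : ℂ) * Complex.I)) • (1 : Matrix (Fin n) (Fin n) ℂ)
      - A.map Complex.ofReal).det :=
  (Matrix.isUnit_iff_isUnit_det _).mp (isUnit_res A hA _ (by simp))

lemma cont_pencil (A : Matrix (Fin n) (Fin n) ℝ) :
    Continuous fun ν : ℝ =>
      ((ν : ℂ) * Complex.I) • (1 : Matrix (Fin n) (Fin n) ℂ) - A.map Complex.ofReal := by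
  apply continuous_matrix
  intro i j
  simp only [Matrix.sub_apply, Matrix.smul_apply, smul_eq_mul]
  fun_prop

lemma cont_res (A : Matrix (Fin n) (Fin n) ℝ)
    (hdet : ∀ ν : ℝ, IsUnit (((ν : ℂ) * Complex.I) • (1 : Matrix (Fin n) (Fin n) ℂ)
      - A.map Complex.ofReal).det) :
    Continuous fun ν : ℝ => resolventIm A ν := by
  apply continuous_matrix
  intro i j
  have h : ∀ ν : ℝ, resolventIm A ν i j =
      (((ν : ℂ) * Complex.I) • (1 : Matrix (Fin n) (Fin n) ℂ) - A.map Complex.ofReal).det⁻¹ *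
      (((ν : ℂ) * Complex.I) • (1 : Matrix (Fin n) (Fin n) ℂ)
        - A.map Complex.ofReal).adjugate i j := by
    intro ν
    rw [resolventIm, Matrix.inv_def, Matrix.smul_apply, Ring.inverse_eq_inv', smul_eq_mul]
  simp only [h]
  exact (((cont_pencil A).matrix_det).inv₀ fun ν => ((hdet ν).ne_zero)).mul
    (((cont_pencil A).matrix_adjugate).matrix_elem i j)

lemma map_conj_inv (X : Matrix (Fin n) (Fin n) ℂ) (hX : IsUnit X.det) :
    X⁻¹.map (starRingEnd ℂ) = (X.map (starRingEnd ℂ))⁻¹ := by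
  symm
  apply Matrix.inv_eq_right_inv
  rw [← Matrix.map_mul, Matrix.mul_nonsing_inv _ hX]
  ext i j
  simp [Matrix.one_apply, apply_ite (starRingEnd ℂ)]

lemma res_conj (A : Matrix (Fin n) (Fin n) ℝ)
    (hdet : ∀ ν : ℝ, IsUnit (((ν : ℂ) * Complex.I) • (1 : Matrix (Fin n) (Fin n) ℂ)
      - A.map Complex.ofReal).det) (ν : ℝ) (i j : Fin n) :
    (starRingEnd ℂ) (resolventIm A ν i j) = resolventIm A (-ν) i j := by
  have h : (resolventIm A ν).map (starRingEnd ℂ) = resolventIm A (-ν) := by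
    rw [resolventIm, map_conj_inv _ (hdet ν), resolventIm]
    congr 1
    ext i j
    simp [Matrix.one_apply, apply_ite (starRingEnd ℂ), Complex.conj_ofReal]
    split <;> simp
  rw [← h]; rfl

lemma log_integrand (A : Matrix (Fin n) (Fin n) ℝ) (Ω : ℝ)
    (hdet : ∀ ν : ℝ, IsUnit (((ν : ℂ) * Complex.I) • (1 : Matrix (Fin n) (Fin n) ℂ)
      - A.map Complex.ofReal).det) (s : ℝ) :
    let M := A.map Complex.ofReal
    let N := (M + ((Ω : ℂ) * Complex.I) • (1 : Matrix (Fin n) (Fin n) ℂ)) *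
      (M - ((Ω : ℂ) * Complex.I) • (1 : Matrix (Fin n) (Fin n) ℂ))⁻¹
    (N - 1) * ((s : ℂ) • (N - 1) + 1)⁻¹ =
      (-(2 * (Ω : ℂ)) * Complex.I) • resolventIm A (Ω * (1 - 2 * s)) := by
  intro M N
  set c : ℂ := (Ω : ℂ) * Complex.I with hc
  set P : Matrix (Fin n) (Fin n) ℂ := M - c • 1 with hP
  set X : Matrix (Fin n) (Fin n) ℂ :=
    (((Ω * (1 - 2 * s) : ℝ) : ℂ) * Complex.I) • (1 : Matrix (Fin n) (Fin n) ℂ) - M with hX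
  have hPunit : IsUnit P.det := by
    have h := hdet Ω
    have : P = -((((Ω : ℝ) : ℂ) * Complex.I) • (1 : Matrix (Fin n) (Fin n) ℂ) - M) := by
      rw [hP, hc]; module
    rw [this, Matrix.det_neg, Fintype.card_fin]
    exact (isUnit_one.neg.pow n).mul h
  have hXunit : IsUnit X.det := hdet _
  have hPP : P * P⁻¹ = 1 := Matrix.mul_nonsing_inv _ hPunit
  have hN1 : N - 1 = (2 * c) • P⁻¹ := by
    have h0 : N - 1 = (M + c • 1) * P⁻¹ - P * P⁻¹ := by rw [hPP]
    rw [h0, ← Matrix.sub_mul]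
    have h2 : M + c • 1 - P = (2 * c) • (1 : Matrix (Fin n) (Fin n) ℂ) := by
      rw [hP]; module
    rw [h2, Matrix.smul_mul, Matrix.one_mul]
  have hQ : (s : ℂ) • (N - 1) + 1 = (-X) * P⁻¹ := by
    rw [hN1, smul_smul, ← hPP]
    have h1 : ((s : ℂ) * (2 * c)) • P⁻¹ =
        (((s : ℂ) * (2 * c)) • (1 : Matrix (Fin n) (Fin n) ℂ)) * P⁻¹ := by
      rw [Matrix.smul_mul, Matrix.one_mul]
    rw [h1, ← Matrix.add_mul]
    congr 1
    rw [hX, hP, hc]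
    push_cast
    module
  rw [hQ, hN1, Matrix.mul_inv_rev, Matrix.nonsing_inv_nonsing_inv _ hPunit]
  have hXneg : (-X)⁻¹ = -(X⁻¹) := by
    apply Matrix.inv_eq_right_inv
    rw [Matrix.neg_mul, Matrix.mul_neg, neg_neg, Matrix.mul_nonsing_inv _ hXunit]
  rw [hXneg, Matrix.smul_mul, ← Matrix.mul_assoc, Matrix.nonsing_inv_mul _ hPunit,
    Matrix.one_mul]
  rw [resolventIm, ← hX, smul_neg, ← neg_smul]
  congr 1
  rw [hc]; ring

lemma intervalIntegral_conj {f : ℝ → ℂ} {a b : ℝ} :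
    ∫ x in a..b, (starRingEnd ℂ) (f x) = (starRingEnd ℂ) (∫ x in a..b, f x) := by
  rw [intervalIntegral, intervalIntegral, integral_conj, integral_conj, map_sub]

/-- matLog of the Cayley-type matrix equals `-I • ∫ resolvent`. -/
lemma matLog_eq (A : Matrix (Fin n) (Fin n) ℝ) (Ω : ℝ) (hΩ : 0 < Ω)
    (hdet : ∀ ν : ℝ, IsUnit (((ν : ℂ) * Complex.I) • (1 : Matrix (Fin n) (Fin n) ℂ)
      - A.map Complex.ofReal).det) :
    matLog ((A.map Complex.ofReal + ((Ω : ℂ) * Complex.I) • (1 : Matrix (Fin n) (Fin n) ℂ)) *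
      (A.map Complex.ofReal - ((Ω : ℂ) * Complex.I) • (1 : Matrix (Fin n) (Fin n) ℂ))⁻¹) =
    (-Complex.I) • (Matrix.of fun i k => ∫ ν in (-Ω)..Ω, resolventIm A ν i k) := by
  ext i k
  rw [matLog, Matrix.smul_apply, Matrix.of_apply, Matrix.of_apply]
  have h1 : ∀ s : ℝ,
      (((A.map Complex.ofReal + ((Ω : ℂ) * Complex.I) • (1 : Matrix (Fin n) (Fin n) ℂ)) *
        (A.map Complex.ofReal - ((Ω : ℂ) * Complex.I) • (1 : Matrix (Fin n) (Fin n) ℂ))⁻¹ - 1) *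
        ((s : ℂ) • ((A.map Complex.ofReal +
          ((Ω : ℂ) * Complex.I) • (1 : Matrix (Fin n) (Fin n) ℂ)) *
        (A.map Complex.ofReal - ((Ω : ℂ) * Complex.I) • (1 : Matrix (Fin n) (Fin n) ℂ))⁻¹ - 1)
          + 1)⁻¹) i k =
      (-(2 * (Ω : ℂ)) * Complex.I) * resolventIm A ((-2 * Ω) * s + Ω) i k := by
    intro s
    rw [log_integrand A Ω hdet s]
    rw [Matrix.smul_apply, smul_eq_mul]
    have harg : Ω * (1 - 2 * s) = (-2 * Ω) * s + Ω := by ring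
    rw [harg]
  simp only [h1]
  rw [intervalIntegral.integral_const_mul]
  have h2 : ∫ s in (0:ℝ)..1, resolventIm A ((-2 * Ω) * s + Ω) i k =
      ((-2 * Ω)⁻¹ : ℝ) • ∫ ν in ((-2 * Ω) * 0 + Ω)..((-2 * Ω) * 1 + Ω),
        resolventIm A ν i k := by
    exact intervalIntegral.integral_comp_mul_add (fun ν => resolventIm A ν i k)
      (by nlinarith) Ω
  rw [h2]
  have h3 : (-2 * Ω) * 0 + Ω = Ω := by ring
  have h4 : (-2 * Ω) * 1 + Ω = -Ω := by ring
  rw [h3, h4, intervalIntegral.integral_symm]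
  rw [smul_neg, Complex.real_smul, smul_eq_mul]
  push_cast
  have hΩ' : (Ω : ℂ) ≠ 0 := Complex.ofReal_ne_zero.mpr hΩ.ne'
  field_simp

end Stmt10Aux

namespace Stmt10Aux2
open MeasureTheory Complex Stmt10Aux

lemma realmap_ct {a b : ℕ} (X : Matrix (Fin a) (Fin b) ℝ) :
    (X.map Complex.ofReal)ᴴ = (X.map Complex.ofReal)ᵀ := by
  ext i j
  simp [Matrix.conjTranspose_apply, Complex.conj_ofReal]

lemma trans_trace_mul {a b : ℕ} (X : Matrix (Fin a) (Fin b) ℂ) (Y : Matrix (Fin b) (Fin a) ℂ)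
    (hX : Xᴴ = Xᵀ) (hY : Yᴴ = Yᵀ) : star (Matrix.trace (X * Y)) = Matrix.trace (X * Y) := by
  rw [← Matrix.trace_conjTranspose, Matrix.conjTranspose_mul, hX, hY, ← Matrix.transpose_mul,
    Matrix.trace_transpose, Matrix.trace_mul_comm]

lemma integral_trace_mul {q r : ℕ} (f : ℝ → Matrix (Fin q) (Fin r) ℂ)
    (Z : Matrix (Fin r) (Fin q) ℂ) (a b : ℝ)
    (hf : ∀ i j, IntervalIntegrable (fun ν => f ν i j) volume a b) :
    ∫ ν in a..b, Matrix.trace (f ν * Z) =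
      Matrix.trace ((Matrix.of fun i j => ∫ ν in a..b, f ν i j) * Z) := by
  have h : ∀ F : Matrix (Fin q) (Fin r) ℂ, Matrix.trace (F * Z) =
      ∑ x ∈ Finset.univ ×ˢ (Finset.univ : Finset (Fin r)), F x.1 x.2 * Z x.2 x.1 := by
    intro F
    rw [Finset.sum_product]
    simp [Matrix.trace, Matrix.mul_apply, Matrix.diag]
  simp only [h, Matrix.of_apply]
  rw [intervalIntegral.integral_finset_sum]
  · simp only [intervalIntegral.integral_mul_const]
  · intro x _
    exact (hf x.1 x.2).mul_const _

end Stmt10Aux2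

namespace Stmt10Aux3
open MeasureTheory Complex Stmt10Aux Stmt10Aux2

variable {n : ℕ}

lemma K_real (A : Matrix (Fin n) (Fin n) ℝ) (Ω : ℝ)
    (hdet : ∀ ν : ℝ, IsUnit (((ν : ℂ) * Complex.I) • (1 : Matrix (Fin n) (Fin n) ℂ)
      - A.map Complex.ofReal).det) (i k : Fin n) :
    (starRingEnd ℂ) (∫ ν in (-Ω)..Ω, resolventIm A ν i k) =
      ∫ ν in (-Ω)..Ω, resolventIm A ν i k := by
  rw [← intervalIntegral_conj]
  simp only [res_conj A hdet]
  rw [intervalIntegral.integral_comp_neg (fun ν => resolventIm A ν i k), neg_neg]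

lemma Somega_map (A : Matrix (Fin n) (Fin n) ℝ) (Ω : ℝ) (hΩ : 0 < Ω)
    (hdet : ∀ ν : ℝ, IsUnit (((ν : ℂ) * Complex.I) • (1 : Matrix (Fin n) (Fin n) ℂ)
      - A.map Complex.ofReal).det) :
    (SomegaRe A Ω).map Complex.ofReal =
      ((1 / (2 * Real.pi) : ℝ) : ℂ) •
        (Matrix.of fun i k => ∫ ν in (-Ω)..Ω, resolventIm A ν i k) := by
  ext i k
  rw [SomegaRe, matLog_eq A Ω hΩ hdet]
  simp only [Matrix.map_apply, Matrix.smul_apply, Matrix.of_apply, smul_eq_mul]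
  set e : ℂ := ∫ ν in (-Ω)..Ω, resolventIm A ν i k with he
  have hz : Complex.I / ((2 * Real.pi : ℝ) : ℂ) * (-Complex.I * e) =
      ((1 / (2 * Real.pi) : ℝ) : ℂ) * e := by
    push_cast
    have : Complex.I * Complex.I = -1 := Complex.I_mul_I
    field_simp
    rw [Complex.I_sq]
    ring
  rw [hz]
  have hr : (starRingEnd ℂ) (((1 / (2 * Real.pi) : ℝ) : ℂ) * e) =
      ((1 / (2 * Real.pi) : ℝ) : ℂ) * e := by
    rw [_root_.map_mul, Complex.conj_ofReal, K_real A Ω hdet i k]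
  exact Complex.conj_eq_iff_re.mp hr

end Stmt10Aux3
namespace Stmt10Aux2
open MeasureTheory Complex Stmt10Aux

lemma intervalIntegral_star {f : ℝ → ℂ} {a b : ℝ} :
    ∫ x in a..b, star (f x) = star (∫ x in a..b, f x) :=
  Stmt10Aux.intervalIntegral_conj

lemma herm_trans_mul {a b c : ℕ} (X : Matrix (Fin a) (Fin b) ℂ) (Y : Matrix (Fin b) (Fin c) ℂ)
    (hX : Xᴴ = Xᵀ) (hY : Yᴴ = Yᵀ) : (X * Y)ᴴ = (X * Y)ᵀ := by
  rw [Matrix.conjTranspose_mul, Matrix.transpose_mul, hX, hY]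

end Stmt10Aux2

open MeasureTheory Complex Stmt10Aux Stmt10Aux2 Stmt10Aux3 in
theorem stmt10 {n m p : ℕ} (A : Matrix (Fin n) (Fin n) ℝ) (B : Matrix (Fin n) (Fin m) ℝ)
    (C : Matrix (Fin p) (Fin n) ℝ) (D : Matrix (Fin p) (Fin m) ℝ)
    (Ω : ℝ) (hΩ : 0 < Ω)
    (hA : ∀ μ ∈ spectrum ℂ (A.map Complex.ofReal), μ.re < 0) :
    ((1 / (2 * Real.pi) : ℝ) : ℂ) *
      (∫ ν in (-Ω)..Ω, Matrix.trace (tfEval A B C D ν * (tfEval A B C D ν)ᴴ)) =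
    Matrix.trace
      (C.map Complex.ofReal * flGram A B Ω * (C.map Complex.ofReal)ᵀ +
        (2 : ℂ) •
          ((C.map Complex.ofReal * ((SomegaRe A Ω).map Complex.ofReal) * B.map Complex.ofReal +
              ((Ω / (2 * Real.pi) : ℝ) : ℂ) • D.map Complex.ofReal) *
            (D.map Complex.ofReal)ᵀ)) := by
  have hdet : ∀ ν : ℝ, IsUnit (((ν : ℂ) * Complex.I) • (1 : Matrix (Fin n) (Fin n) ℂ)
      - A.map Complex.ofReal).det := isUnit_res_det A hA
  set Bc := B.map Complex.ofReal with hBc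
  set Cc := C.map Complex.ofReal with hCc
  set Dc := D.map Complex.ofReal with hDc
  -- hermitian-transpose facts for the constant matrices
  have hBct : Bcᴴ = Bcᵀ := by rw [hBc]; exact realmap_ct B
  have hCct : Ccᴴ = Ccᵀ := by rw [hCc]; exact realmap_ct C
  have hDct : Dcᴴ = Dcᵀ := by rw [hDc]; exact realmap_ct D
  have hDct2 : (Dcᵀ)ᴴ = (Dcᵀ)ᵀ := by
    rw [hDc]; ext i j; simp [Complex.conj_ofReal]
  -- basic continuity
  have hRc : Continuous fun ν : ℝ => resolventIm A ν := cont_res A hdet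
  have hRH : Continuous fun ν : ℝ => (resolventIm A ν)ᴴ := hRc.matrix_conjTranspose
  have hgram_cont : Continuous fun ν : ℝ =>
      resolventIm A ν * Bc * Bcᴴ * (resolventIm A ν)ᴴ :=
    ((hRc.matrix_mul continuous_const).matrix_mul continuous_const).matrix_mul hRH
  have hRint : ∀ i j, IntervalIntegrable (fun ν => resolventIm A ν i j) volume (-Ω) Ω :=
    fun i j => (hRc.matrix_elem i j).intervalIntegrable _ _
  have hgint : ∀ i j, IntervalIntegrable
      (fun ν => (resolventIm A ν * Bc * Bcᴴ * (resolventIm A ν)ᴴ) i j) volume (-Ω) Ω :=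
    fun i j => (hgram_cont.matrix_elem i j).intervalIntegrable _ _
  -- the entrywise integral matrices
  set K : Matrix (Fin n) (Fin n) ℂ :=
    Matrix.of (fun i k => ∫ ν in (-Ω)..Ω, resolventIm A ν i k) with hK
  set Kg : Matrix (Fin n) (Fin n) ℂ :=
    Matrix.of (fun i k =>
      ∫ ν in (-Ω)..Ω, (resolventIm A ν * Bc * Bcᴴ * (resolventIm A ν)ᴴ) i k) with hKg
  set Z2 : Matrix (Fin n) (Fin n) ℂ := Bc * (Dcᵀ * Cc) with hZ2
  -- expansion of the integrand
  have hexp : ∀ ν : ℝ, Matrix.trace (tfEval A B C D ν * (tfEval A B C D ν)ᴴ) =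
      Matrix.trace ((resolventIm A ν * Bc * Bcᴴ * (resolventIm A ν)ᴴ) * (Ccᵀ * Cc))
      + Matrix.trace (resolventIm A ν * Z2)
      + star (Matrix.trace (resolventIm A ν * Z2))
      + Matrix.trace (Dc * Dcᵀ) := by
    intro ν
    have hH : tfEval A B C D ν = Cc * resolventIm A ν * Bc + Dc := by
      rw [tfEval, hBc, hCc, hDc]
    rw [hH]
    have h1 : (Cc * resolventIm A ν * Bc + Dc) * (Cc * resolventIm A ν * Bc + Dc)ᴴ =
        Cc * (resolventIm A ν * (Bc * (Bcᴴ * ((resolventIm A ν)ᴴ * Ccᴴ))))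
          + Cc * (resolventIm A ν * (Bc * Dcᴴ))
          + Dc * (Bcᴴ * ((resolventIm A ν)ᴴ * Ccᴴ)) + Dc * Dcᴴ := by
      rw [Matrix.conjTranspose_add, Matrix.conjTranspose_mul, Matrix.conjTranspose_mul,
        Matrix.add_mul, Matrix.mul_add, Matrix.mul_add]
      simp only [Matrix.mul_assoc]
      abel
    rw [h1, Matrix.trace_add, Matrix.trace_add, Matrix.trace_add]
    have e1 : Matrix.trace
          (Cc * (resolventIm A ν * (Bc * (Bcᴴ * ((resolventIm A ν)ᴴ * Ccᴴ))))) =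
        Matrix.trace ((resolventIm A ν * Bc * Bcᴴ * (resolventIm A ν)ᴴ) * (Ccᵀ * Cc)) := by
      rw [Matrix.trace_mul_comm, hCct]
      simp only [Matrix.mul_assoc]
    have e2 : Matrix.trace (Cc * (resolventIm A ν * (Bc * Dcᴴ))) =
        Matrix.trace (resolventIm A ν * Z2) := by
      rw [Matrix.trace_mul_comm, hDct, hZ2]
      simp only [Matrix.mul_assoc]
    have e3 : Matrix.trace (Dc * (Bcᴴ * ((resolventIm A ν)ᴴ * Ccᴴ))) =
        star (Matrix.trace (resolventIm A ν * Z2)) := by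
      have hct : (resolventIm A ν * Z2)ᴴ =
          Ccᴴ * (Dc * (Bcᴴ * (resolventIm A ν)ᴴ)) := by
        rw [hZ2]
        have h4 : (Dcᵀ)ᴴ = Dc := by rw [hDc]; ext i j; simp [Complex.conj_ofReal]
        simp only [Matrix.conjTranspose_mul, h4, Matrix.mul_assoc]
      rw [← Matrix.trace_conjTranspose, hct,
        Matrix.trace_mul_comm Ccᴴ (Dc * (Bcᴴ * (resolventIm A ν)ᴴ))]
      simp only [Matrix.mul_assoc]
    rw [e1, e2, e3, hDct]
  simp only [hexp]
  -- integrability of the four pieces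
  have c1 : Continuous fun ν : ℝ => Matrix.trace
      ((resolventIm A ν * Bc * Bcᴴ * (resolventIm A ν)ᴴ) * (Ccᵀ * Cc)) :=
    (hgram_cont.matrix_mul continuous_const).matrix_trace
  have c2 : Continuous fun ν : ℝ => Matrix.trace (resolventIm A ν * Z2) :=
    (hRc.matrix_mul continuous_const).matrix_trace
  have i1 : IntervalIntegrable _ volume (-Ω) Ω := c1.intervalIntegrable (-Ω) Ω
  have i2 : IntervalIntegrable _ volume (-Ω) Ω := c2.intervalIntegrable (-Ω) Ω
  have i3 : IntervalIntegrable _ volume (-Ω) Ω := (c2.star).intervalIntegrable (-Ω) Ω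
  have i4 : IntervalIntegrable (fun _ : ℝ => Matrix.trace (Dc * Dcᵀ)) volume (-Ω) Ω :=
    intervalIntegrable_const
  rw [intervalIntegral.integral_add ((i1.add i2).add i3) i4,
    intervalIntegral.integral_add (i1.add i2) i3,
    intervalIntegral.integral_add i1 i2]
  -- evaluate the four integrals
  have E1 : ∫ ν in (-Ω)..Ω, Matrix.trace
      ((resolventIm A ν * Bc * Bcᴴ * (resolventIm A ν)ᴴ) * (Ccᵀ * Cc)) =
      Matrix.trace (Kg * (Ccᵀ * Cc)) := by
    rw [hKg]; exact integral_trace_mul _ _ _ _ hgint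
  have E2 : ∫ ν in (-Ω)..Ω, Matrix.trace (resolventIm A ν * Z2) =
      Matrix.trace (K * Z2) := by
    rw [hK]; exact integral_trace_mul _ _ _ _ hRint
  have E3 : ∫ ν in (-Ω)..Ω, star (Matrix.trace (resolventIm A ν * Z2)) =
      star (Matrix.trace (K * Z2)) := by
    rw [intervalIntegral_star, E2]
  have E4 : ∫ _ν in (-Ω)..Ω, Matrix.trace (Dc * Dcᵀ) =
      (Ω - -Ω : ℝ) • Matrix.trace (Dc * Dcᵀ) := intervalIntegral.integral_const _
  -- realness of t2
  have hKher : Kᴴ = Kᵀ := by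
    ext i j
    rw [Matrix.conjTranspose_apply, Matrix.transpose_apply]
    exact K_real A Ω hdet j i
  have hZ2her : Z2ᴴ = Z2ᵀ := by
    rw [hZ2]
    exact herm_trans_mul Bc (Dcᵀ * Cc) hBct (herm_trans_mul (Dcᵀ) Cc hDct2 hCct)
  have ht2 : star (Matrix.trace (K * Z2)) = Matrix.trace (K * Z2) :=
    trans_trace_mul K Z2 hKher hZ2her
  rw [E1, E2, E3, E4, ht2]
  -- now the right-hand side
  have hFl : flGram A B Ω = ((1 / (2 * Real.pi) : ℝ) : ℂ) • Kg := by
    rw [hKg]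
    ext i k
    simp only [flGram, Matrix.of_apply, Matrix.smul_apply, smul_eq_mul, ← hBc]
  have hSo : (SomegaRe A Ω).map Complex.ofReal = ((1 / (2 * Real.pi) : ℝ) : ℂ) • K := by
    rw [hK]; exact Somega_map A Ω hΩ hdet
  rw [Matrix.trace_add, Matrix.trace_smul, hFl, hSo]
  have eC : Matrix.trace (Cc * (((1 / (2 * Real.pi) : ℝ) : ℂ) • Kg) * Ccᵀ) =
      ((1 / (2 * Real.pi) : ℝ) : ℂ) * Matrix.trace (Kg * (Ccᵀ * Cc)) := by
    rw [Matrix.mul_smul, Matrix.smul_mul, Matrix.trace_smul, smul_eq_mul]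
    congr 1
    rw [Matrix.mul_assoc, Matrix.trace_mul_comm Cc (Kg * Ccᵀ)]
    simp only [Matrix.mul_assoc]
  have eS : Matrix.trace ((Cc * (((1 / (2 * Real.pi) : ℝ) : ℂ) • K) * Bc +
        ((Ω / (2 * Real.pi) : ℝ) : ℂ) • Dc) * Dcᵀ) =
      ((1 / (2 * Real.pi) : ℝ) : ℂ) * Matrix.trace (K * Z2) +
        ((Ω / (2 * Real.pi) : ℝ) : ℂ) * Matrix.trace (Dc * Dcᵀ) := by
    rw [Matrix.add_mul, Matrix.trace_add, Matrix.smul_mul, Matrix.trace_smul, smul_eq_mul]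
    congr 1
    rw [Matrix.mul_smul, Matrix.smul_mul, Matrix.smul_mul, Matrix.trace_smul, smul_eq_mul]
    congr 1
    rw [Matrix.mul_assoc, Matrix.mul_assoc, Matrix.trace_mul_comm Cc (K * (Bc * Dcᵀ)), hZ2]
    simp only [Matrix.mul_assoc]
  rw [eC, eS]
  rw [Complex.real_smul, smul_eq_mul]
  push_cast
  ring
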